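/- Let D₀ be the unit disk centered at the origin, α ∈ (0, π/4), and Q a closed convex set with (cos α)·D₀ ⊆ Q ⊆ D₀. Let a, b ∈ ∂Q, let ℓ_a, ℓ_b be supporting lines of Q at a and b respectively, and let θ_a, θ_b be the (unsigned) angles that ℓ_a and ℓ_b form with the line through a and b. Then |θ_a − θ_b| ≤ 2α. -/

import Mathlib

open Real
open scoped RealInnerProductSpace

abbrev E2 := EuclideanSpace ℝ (Fin 2)

/-- The planar cross product (determinant) of two vectors. -/
noncomputable def sla_cross (x y : E2) : ℝ := x 0 * y 1 - x 1 * y 0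

lemma sla_inner2 (x y : E2) : ⟪x, y⟫ = x 0 * y 0 + x 1 * y 1 := by
  simp [PiLp.inner_apply, Fin.sum_univ_two, RCLike.inner_apply]; ring

lemma sla_norm2 (x : E2) : ‖x‖^2 = x 0 ^ 2 + x 1 ^ 2 := by
  rw [← real_inner_self_eq_norm_sq, sla_inner2]; ring

lemma sla_lagrange (x y : E2) : ⟪x,y⟫^2 + (sla_cross x y)^2 = ‖x‖^2 * ‖y‖^2 := by
  rw [sla_inner2, sla_norm2, sla_norm2, sla_cross]; ring

lemma sla_decomp (x y e : E2) :
    ⟪x,y⟫ * ‖e‖^2 = ⟪x,e⟫*⟪y,e⟫ + sla_cross e x * sla_cross e y := by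
  rw [sla_inner2, sla_inner2, sla_inner2, sla_norm2, sla_cross, sla_cross]; ring

lemma sla_core (α s t : ℝ) (hα1 : 0 < α) (hα2 : α < π/2)
    (hs0 : 0 ≤ s) (hs1 : s ≤ 1) (ht0 : 0 ≤ t) (ht1 : t ≤ 1)
    (h : Real.cos α ≤ Real.sqrt (1 - t^2) * s + t * Real.sqrt (1 - s^2)) :
    |Real.arcsin t + Real.arcsin s - π/2| ≤ α := by
  have hsin : Real.sin (arcsin t + arcsin s)
      = Real.sqrt (1 - t^2) * s + t * Real.sqrt (1 - s^2) := by
    rw [Real.sin_add, Real.sin_arcsin (by linarith) hs1, Real.sin_arcsin (by linarith) ht1,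
        Real.cos_arcsin, Real.cos_arcsin]
    ring
  have hcosδ : Real.cos (arcsin t + arcsin s - π/2) = Real.sin (arcsin t + arcsin s) := by
    rw [show arcsin t + arcsin s - π/2 = -(π/2 - (arcsin t + arcsin s)) by ring,
        Real.cos_neg, Real.cos_pi_div_two_sub]
  have hts := Real.arcsin_nonneg.mpr ht0
  have hss := Real.arcsin_nonneg.mpr hs0
  have hts2 := Real.arcsin_le_pi_div_two t
  have hss2 := Real.arcsin_le_pi_div_two s
  by_contra hcon
  push_neg at hcon
  have habs : |arcsin t + arcsin s - π/2| ≤ π := by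
    rw [abs_le]; constructor <;> linarith [Real.pi_pos]
  have hlt := Real.cos_lt_cos_of_nonneg_of_le_pi (le_of_lt hα1) habs hcon
  rw [Real.cos_abs, hcosδ, hsin] at hlt
  linarith

lemma sla_scalar_side (α L P C T X : ℝ) (hα1 : 0 < α) (hα2 : α < π/2)
    (hL : 0 < L) (hP0 : 0 ≤ P) (hC0 : 0 ≤ C) (hT0 : 0 ≤ T) (hX0 : 0 ≤ X)
    (hPC : P^2 + C^2 = L^2) (hXT : X^2 + T^2 ≤ L^2)
    (hkey : Real.cos α * L^2 ≤ P * X + C * T) :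
    |Real.arcsin (T/L) + Real.arcsin (P/L) - π/2| ≤ α := by
  have hL2 : (0:ℝ) < L^2 := by positivity
  have hs1 : P / L ≤ 1 := by rw [div_le_one hL]; nlinarith
  have ht1 : T / L ≤ 1 := by rw [div_le_one hL]; nlinarith
  have hs0 : (0:ℝ) ≤ P / L := div_nonneg hP0 hL.le
  have ht0 : (0:ℝ) ≤ T / L := div_nonneg hT0 hL.le
  have hsq1 : Real.sqrt (1 - (P/L)^2) = C / L := by
    rw [show (1:ℝ) - (P/L)^2 = (C/L)^2 by field_simp; linarith]
    exact Real.sqrt_sq (div_nonneg hC0 hL.le)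
  have hsq2 : X / L ≤ Real.sqrt (1 - (T/L)^2) := by
    rw [Real.le_sqrt (div_nonneg hX0 hL.le) (by nlinarith)]
    rw [div_pow, div_pow, div_le_iff₀ hL2, sub_mul, one_mul, div_mul_cancel₀ _ hL2.ne']
    linarith
  have hmain : Real.cos α ≤ Real.sqrt (1 - (T/L)^2) * (P/L)
      + (T/L) * Real.sqrt (1 - (P/L)^2) := by
    have h2 : Real.cos α ≤ (X/L) * (P/L) + (T/L) * (C/L) := by
      rw [div_mul_div_comm, div_mul_div_comm, ← add_div, le_div_iff₀ (by positivity)]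
      nlinarith
    have h3 := mul_le_mul_of_nonneg_right hsq2 hs0
    rw [hsq1]
    linarith
  exact sla_core α (P/L) (T/L) hα1 hα2 hs0 hs1 ht0 ht1 hmain

lemma sla_side (α : ℝ) (hα1 : 0 < α) (hα2 : α < π/2) (e n x : E2)
    (hn : ‖n‖ = 1) (hx : ‖x‖ ≤ 1) (he : e ≠ 0)
    (hcos : Real.cos α ≤ ⟪n, x⟫) :
    |Real.arcsin (|sla_cross e x| / ‖e‖) + Real.arcsin (|⟪n, e⟫| / ‖e‖) - π/2| ≤ α := by
  have hL : (0:ℝ) < ‖e‖ := norm_pos_iff.mpr he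
  apply sla_scalar_side α ‖e‖ |⟪n, e⟫| |sla_cross e n| |sla_cross e x| |⟪x, e⟫| hα1 hα2 hL
    (abs_nonneg _) (abs_nonneg _) (abs_nonneg _) (abs_nonneg _)
  · have h1 := sla_lagrange e n
    rw [real_inner_comm, hn] at h1
    rw [sq_abs, sq_abs]; nlinarith
  · have h1 := sla_lagrange e x
    rw [real_inner_comm] at h1
    have hx2 : ‖x‖^2 ≤ 1 := by nlinarith [norm_nonneg x]
    rw [sq_abs, sq_abs]
    nlinarith [sq_nonneg ‖e‖]
  · have h1 := sla_decomp n x e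
    calc Real.cos α * ‖e‖^2 ≤ ⟪n,x⟫ * ‖e‖^2 := by nlinarith [sq_nonneg ‖e‖]
      _ = ⟪n,e⟫*⟪x,e⟫ + sla_cross e n * sla_cross e x := h1
      _ ≤ |⟪n, e⟫| * |⟪x, e⟫| + |sla_cross e n| * |sla_cross e x| := by
          rw [← abs_mul, ← abs_mul]
          exact add_le_add (le_abs_self _) (le_abs_self _)

theorem supporting_line_angles_close (α : ℝ) (hα : α ∈ Set.Ioo 0 (π / 4))
    (Q : Set E2) (hQclosed : IsClosed Q) (hQconv : Convex ℝ Q)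
    (hQ1 : Metric.closedBall (0 : E2) (Real.cos α) ⊆ Q)
    (hQ2 : Q ⊆ Metric.closedBall (0 : E2) 1)
    (a b : E2) (ha : a ∈ frontier Q) (hb : b ∈ frontier Q) (hab : a ≠ b)
    (na nb : E2) (hna : ‖na‖ = 1) (hnb : ‖nb‖ = 1)
    (hsa : ∀ x ∈ Q, ⟪na, x - a⟫ ≤ 0) (hsb : ∀ x ∈ Q, ⟪nb, x - b⟫ ≤ 0) :
    |Real.arcsin (|⟪na, b - a⟫| / ‖b - a‖) -
      Real.arcsin (|⟪nb, b - a⟫| / ‖b - a‖)| ≤ 2 * α := by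
  have hπ := Real.pi_pos
  have hα1 : 0 < α := hα.1
  have hα2 : α < π/2 := by have := hα.2; linarith
  have hcosα : 0 < Real.cos α := Real.cos_pos_of_mem_Ioo ⟨by linarith, hα2⟩
  have haQ : a ∈ Q := hQclosed.frontier_subset ha
  have hbQ : b ∈ Q := hQclosed.frontier_subset hb
  have hA1 : ‖a‖ ≤ 1 := mem_closedBall_zero_iff.mp (hQ2 haQ)
  have hB1 : ‖b‖ ≤ 1 := mem_closedBall_zero_iff.mp (hQ2 hbQ)
  have hcosa : Real.cos α ≤ ⟪na, a⟫ := by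
    have hmem : (Real.cos α) • na ∈ Q := by
      apply hQ1
      rw [mem_closedBall_zero_iff, norm_smul, hna, mul_one, Real.norm_eq_abs,
        abs_of_pos hcosα]
    have h := hsa _ hmem
    rw [inner_sub_right, real_inner_smul_right, real_inner_self_eq_norm_sq, hna] at h
    nlinarith
  have hcosb : Real.cos α ≤ ⟪nb, b⟫ := by
    have hmem : (Real.cos α) • nb ∈ Q := by
      apply hQ1
      rw [mem_closedBall_zero_iff, norm_smul, hnb, mul_one, Real.norm_eq_abs,
        abs_of_pos hcosα]
    have h := hsb _ hmem
    rw [inner_sub_right, real_inner_smul_right, real_inner_self_eq_norm_sq, hnb] at h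
    nlinarith
  have Ha := sla_side α hα1 hα2 (b - a) na a hna hA1 (sub_ne_zero.mpr hab.symm) hcosa
  have Hb := sla_side α hα1 hα2 (a - b) nb b hnb hB1 (sub_ne_zero.mpr hab) hcosb
  have e1 : ‖a - b‖ = ‖b - a‖ := norm_sub_rev a b
  have e2 : |⟪nb, a - b⟫| = |⟪nb, b - a⟫| := by
    rw [show a - b = -(b - a) by abel, inner_neg_right, abs_neg]
  have e3 : |sla_cross (a - b) b| = |sla_cross (b - a) a| := by
    rw [show sla_cross (a - b) b = -(sla_cross (b - a) a) by
      simp only [sla_cross, PiLp.sub_apply]; ring, abs_neg]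
  rw [e1, e2, e3] at Hb
  rw [abs_le] at Ha Hb ⊢
  constructor <;> [linarith [Ha.1, Hb.2]; linarith [Ha.2, Hb.1]]
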